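/- For every maximal location ⟨i,j⟩ of s, the string O_s^{⟨i,j⟩} is a sequence of pairwise distinct letters whose set of letters is exactly C_s(i,j); i.e., O_s^{⟨i,j⟩} is a permutation of the fingerprint C_s(i,j). -/

import Mathlib

/-- The fingerprint `C_s(i,j)`: the set of distinct letters occurring in `s_i … s_j`. -/
def fingerprint {α : Type*} [DecidableEq α] (s : ℕ → α) (i j : ℕ) : Finset α :=
  (Finset.Icc i j).image s

/-- `⟨i,j⟩` is a maximal location of the sequence `s_1 … s_n`. -/
def IsMaxLoc {α : Type*} [DecidableEq α] (s : ℕ → α) (n i j : ℕ) : Prop :=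
  1 ≤ i ∧ i ≤ j ∧ j ≤ n ∧
    (1 < i → s (i - 1) ∉ fingerprint s i j) ∧
    (j < n → s (j + 1) ∉ fingerprint s i j)

/-- `fo_s(i,j)`: the string of the first occurrences of each distinct letter
encountered when reading `s_i … s_j` from left to right. -/
def fo {α : Type*} [DecidableEq α] (s : ℕ → α) (i j : ℕ) : List α :=
  ((List.range' i (j + 1 - i)).filter
    (fun p => decide (∀ q ∈ Finset.Ico i p, s q ≠ s p))).map s

/-- `Support([i,j])`: the minimum over letters `a ∈ C_s(i,j)` of the position of
the rightmost occurrence of `a` in `s_i … s_j`. -/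
noncomputable def support {α : Type*} [DecidableEq α] (s : ℕ → α) (i j : ℕ) : ℕ :=
  sInf {q | ∃ a ∈ fingerprint s i j, q = sSup {p | i ≤ p ∧ p ≤ j ∧ s p = a}}

/-- `O_s^{[i,j]} = fo_s(Support([i,j]), j)`. -/
noncomputable def Ostr {α : Type*} [DecidableEq α] (s : ℕ → α) (i j : ℕ) : List α :=
  fo s (support s i j) j

/-- The substring `s_i … s_j` as a list. -/
def substr {α : Type*} (s : ℕ → α) (i j : ℕ) : List α :=
  (List.range' i (j + 1 - i)).map s

/-- The position of the next occurrence of `s_i` after position `i`, within the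
extended sequence `s_1 … s_{n+1}`, and `n + 2` if there is none. -/
noncomputable def nxt {α : Type*} (s : ℕ → α) (n i : ℕ) : ℕ :=
  sInf ({j | i < j ∧ j ≤ n + 1 ∧ s j = s i} ∪ {n + 2})

/-- `lfo_s(i) = fo_s(i, j − 1)` where `j` is the minimal position with `i < j` and
`s_j = s_i` if it exists and `j = n + 2` otherwise, computed in the sequence
extended by the sentinel `s_{n+1} = #`. -/
noncomputable def lfo {α : Type*} [DecidableEq α] (s : ℕ → α) (n i : ℕ) : List α :=
  fo s i (nxt s n i - 1)

lemma fo_nodup {α : Type*} [DecidableEq α] (s : ℕ → α) (a j : ℕ) :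
    (fo s a j).Nodup := by
  unfold fo
  apply List.Nodup.map_on
  · intro x hx y hy hxy
    have hx' := List.mem_filter.mp hx
    have hy' := List.mem_filter.mp hy
    have hxr := (List.mem_range'_1).mp hx'.1
    have hyr := (List.mem_range'_1).mp hy'.1
    have hxP := of_decide_eq_true hx'.2
    have hyP := of_decide_eq_true hy'.2
    by_contra hne
    rcases Nat.lt_or_ge x y with hlt | hge
    · exact hyP x (Finset.mem_Ico.mpr ⟨hxr.1, hlt⟩) hxy
    · have hlt : y < x := lt_of_le_of_ne hge (Ne.symm hne)
      exact hxP y (Finset.mem_Ico.mpr ⟨hyr.1, hlt⟩) hxy.symm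
  · exact (List.nodup_range' (h := Nat.one_pos)).filter _

lemma fo_toFinset {α : Type*} [DecidableEq α] (s : ℕ → α) (a j : ℕ) (haj : a ≤ j) :
    (fo s a j).toFinset = fingerprint s a j := by
  ext b
  simp only [fo, fingerprint, List.mem_toFinset, List.mem_map, Finset.mem_image,
    Finset.mem_Icc]
  constructor
  · rintro ⟨p, hp, rfl⟩
    have hp' := (List.mem_range'_1).mp (List.mem_filter.mp hp).1
    exact ⟨p, ⟨hp'.1, by omega⟩, rfl⟩
  · rintro ⟨p, ⟨hap, hpj⟩, rfl⟩
    have hex : ∃ q, a ≤ q ∧ q ≤ j ∧ s q = s p := ⟨p, hap, hpj, rfl⟩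
    set p0 := Nat.find hex with hp0
    obtain ⟨h1, h2, h3⟩ := Nat.find_spec hex
    refine ⟨p0, List.mem_filter.mpr ⟨List.mem_range'_1.mpr ⟨h1, by omega⟩, ?_⟩, h3⟩
    rw [decide_eq_true_iff]
    intro q hq hq'
    have hq'' := Finset.mem_Ico.mp hq
    exact Nat.find_min hex hq''.2 ⟨hq''.1, by omega, by rw [hq', h3]⟩

lemma support_spec {α : Type*} [DecidableEq α] (s : ℕ → α) (i j : ℕ) (hij : i ≤ j) :
    i ≤ support s i j ∧ support s i j ≤ j ∧
    fingerprint s (support s i j) j = fingerprint s i j := by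
  set T := fun a => sSup {p | i ≤ p ∧ p ≤ j ∧ s p = a} with hT
  have hTmem : ∀ a ∈ fingerprint s i j, i ≤ T a ∧ T a ≤ j ∧ s (T a) = a := by
    intro a ha
    rw [fingerprint, Finset.mem_image] at ha
    obtain ⟨k, hk, rfl⟩ := ha
    rw [Finset.mem_Icc] at hk
    have hne : {p | i ≤ p ∧ p ≤ j ∧ s p = s k}.Nonempty := ⟨k, hk.1, hk.2, rfl⟩
    have hbdd : BddAbove {p | i ≤ p ∧ p ≤ j ∧ s p = s k} := ⟨j, fun p hp => hp.2.1⟩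
    exact Nat.sSup_mem hne hbdd
  have hsupp_def : support s i j = sInf {q | ∃ a ∈ fingerprint s i j, q = T a} := rfl
  have hsi : s i ∈ fingerprint s i j :=
    Finset.mem_image.mpr ⟨i, Finset.mem_Icc.mpr ⟨le_refl i, hij⟩, rfl⟩
  have hQne : {q | ∃ a ∈ fingerprint s i j, q = T a}.Nonempty := ⟨T (s i), s i, hsi, rfl⟩
  have hsupp : support s i j ∈ {q | ∃ a ∈ fingerprint s i j, q = T a} := by
    rw [hsupp_def]; exact Nat.sInf_mem hQne
  obtain ⟨a0, ha0, heq⟩ := hsupp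
  have h0 := hTmem a0 ha0
  refine ⟨heq ▸ h0.1, heq ▸ h0.2.1, ?_⟩
  ext b
  simp only [fingerprint, Finset.mem_image, Finset.mem_Icc]
  constructor
  · rintro ⟨p, ⟨h1, h2⟩, rfl⟩
    exact ⟨p, ⟨le_trans (heq ▸ h0.1) h1, h2⟩, rfl⟩
  · rintro ⟨p, ⟨h1, h2⟩, rfl⟩
    have hmem : s p ∈ fingerprint s i j :=
      Finset.mem_image.mpr ⟨p, Finset.mem_Icc.mpr ⟨h1, h2⟩, rfl⟩
    have hTp := hTmem _ hmem
    have hle : support s i j ≤ T (s p) := by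
      rw [hsupp_def]; exact Nat.sInf_le ⟨s p, hmem, rfl⟩
    exact ⟨T (s p), ⟨hle, hTp.2.1⟩, hTp.2.2⟩


/-- For every maximal location `⟨i,j⟩`, the string `O_s^{⟨i,j⟩}` is a sequence of
pairwise distinct letters whose set of letters is exactly `C_s(i,j)`, i.e. it is a
permutation of the fingerprint `C_s(i,j)`. -/
theorem Ostr_nodup_toFinset_eq {α : Type*} [DecidableEq α]
    (s : ℕ → α) (n i j : ℕ) (h : IsMaxLoc s n i j) :
    (Ostr s i j).Nodup ∧ (Ostr s i j).toFinset = fingerprint s i j := by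
  obtain ⟨-, hij, -, -, -⟩ := h
  obtain ⟨h1, h2, h3⟩ := support_spec s i j hij
  exact ⟨fo_nodup s _ _, by rw [Ostr, fo_toFinset s _ _ h2, h3]⟩
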